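/- If x̄ solves GVI(𝒳, F_a), i.e., x̄ ∈ 𝒳 and there exists ḡ ∈ F_a(x̄) with ⟨ḡ, x − x̄⟩ ≥ 0 for all x ∈ 𝒳, then x̄ is a generalized aggregative equilibrium: x̄ ∈ 𝒳 and, for every i and every z ∈ X_i(x̄_{−i}) := {z ∈ Ω_i : A_i z − b_i ≤ Σ_{j≠i}(b_j − A_j x̄_j)}, it holds that f_i(x̄_i, M_n x̄) ≤ f_i(z, M_n x̄). -/
import Mathlib


noncomputable section

open Matrix Finset Filter

/-- A vector in `ℝ^k`. -/
abbrev Vec (k : ℕ) := Fin k → ℝ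

/-- A block vector in `ℝ^{kN}` (N blocks of size k). -/
abbrev VecN (N k : ℕ) := Fin N → Vec k

/-- Standard inner product on `ℝ^k`. -/
def dot {k : ℕ} (u v : Vec k) : ℝ := ∑ j, u j * v j

/-- Standard inner product on `ℝ^{kN}`. -/
def dotN {N k : ℕ} (u v : VecN N k) : ℝ := ∑ i, dot (u i) (v i)

/-- Subdifferential of `g : ℝ^p → ℝ` at `x`. -/
def subdiff {p : ℕ} (g : Vec p → ℝ) (x : Vec p) : Set (Vec p) :=
  {v | ∀ z, g x + dot v (z - x) ≤ g z}

/-- Normal cone of `S ⊆ ℝ^p` at `x` (empty if `x ∉ S`). -/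
def normalCone {p : ℕ} (S : Set (Vec p)) (x : Vec p) : Set (Vec p) :=
  {v | x ∈ S ∧ ∀ z ∈ S, dot v (z - x) ≤ 0}

/-- The nonnegative orthant `ℝ^m_{≥0}`. -/
def orthant (m : ℕ) : Set (Vec m) := {v | ∀ j, 0 ≤ v j}

/-- Euclidean projection onto the nonnegative orthant. -/
def projPos {m : ℕ} (v : Vec m) : Vec m := fun j => max (v j) 0

/-- `M x = (1/N) Σ_i x_i` (the averaging map `M_n`, resp. its `m`-dim analogue). -/
def Mavg {N k : ℕ} (x : VecN N k) : Vec k := (N : ℝ)⁻¹ • ∑ i, x i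

/-- `P y = Σ_i y_i`. -/
def Psum {N k : ℕ} (y : VecN N k) : Vec k := ∑ i, y i

/-- `Mᵀ μ` : transpose of the averaging map. -/
def MavgT (N : ℕ) {k : ℕ} (μ : Vec k) : VecN N k := fun _ => (N : ℝ)⁻¹ • μ

/-- `Pᵀ λ` : transpose of the summing map. -/
def PsumT (N : ℕ) {k : ℕ} (l : Vec k) : VecN N k := fun _ => l

/-- Monotonicity of a set-valued map w.r.t. an inner product `ip`. -/
def MonoOn {V : Type} [AddCommGroup V] (ip : V → V → ℝ) (F : V → Set V) : Prop :=
  ∀ ω ω' u v, u ∈ F ω → v ∈ F ω' → 0 ≤ ip (u - v) (ω - ω')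

/-- Maximal monotonicity of a set-valued map w.r.t. an inner product `ip`. -/
def MaxMonoOn {V : Type} [AddCommGroup V] (ip : V → V → ℝ) (F : V → Set V) : Prop :=
  MonoOn ip F ∧ ∀ ω u, (∀ ω' v, v ∈ F ω' → 0 ≤ ip (u - v) (ω - ω')) → u ∈ F ω

/-- `A x = Σ_i A_i x_i` for `A = [A_1 ⋯ A_N]`. -/
def bigA {N n m : ℕ} (A : Fin N → Matrix (Fin m) (Fin n) ℝ) (x : VecN N n) : Vec m :=
  ∑ i, (A i).mulVec (x i)

/-- The collective feasible set `𝒳 = (∏_i Ω_i) ∩ {x : A x ≤ b}`. -/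
def Xfeas {N n m : ℕ} (Ω : Fin N → Set (Vec n)) (A : Fin N → Matrix (Fin m) (Fin n) ℝ)
    (b : Fin N → Vec m) : Set (VecN N n) :=
  {x | (∀ i, x i ∈ Ω i) ∧ ∀ j, bigA A x j ≤ (∑ i, b i) j}

/-- Extended pseudo-subdifferential `F_e(x, σ)`. -/
def Fe {N n : ℕ} (f : Fin N → Vec n → Vec n → ℝ) (x : VecN N n) (σ : Vec n) :
    Set (VecN N n) :=
  {g | ∀ i, g i ∈ subdiff (fun z => f i z σ) (x i)}

/-- Aggregative pseudo-subdifferential `F_a(x) = F_e(x, M_n x)`. -/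
def Fa {N n : ℕ} (f : Fin N → Vec n → Vec n → ℝ) (x : VecN N n) : Set (VecN N n) :=
  Fe f x (Mavg x)

/-- `x̄` is a variational generalized aggregative equilibrium (v-GAE):
it solves GVI(𝒳, F_a). -/
def isVGAE {N n m : ℕ} (Ω : Fin N → Set (Vec n)) (f : Fin N → Vec n → Vec n → ℝ)
    (A : Fin N → Matrix (Fin m) (Fin n) ℝ) (b : Fin N → Vec m) (xbar : VecN N n) : Prop :=
  xbar ∈ Xfeas Ω A b ∧ ∃ g ∈ Fa f xbar, ∀ x ∈ Xfeas Ω A b, 0 ≤ dotN g (x - xbar)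

/-- The local constraint set `C = {(x,y) : x_i ∈ Ω_i, y_i = A_i x_i - b_i}`. -/
def Cset {N n m : ℕ} (Ω : Fin N → Set (Vec n)) (A : Fin N → Matrix (Fin m) (Fin n) ℝ)
    (b : Fin N → Vec m) : Set (VecN N n × VecN N m) :=
  {p | ∀ i, p.1 i ∈ Ω i ∧ p.2 i = (A i).mulVec (p.1 i) - b i}

/-- Inner product on `ℝ^{nN} × ℝ^{mN}`. -/
def ip2 {N n m : ℕ} (p q : VecN N n × VecN N m) : ℝ := dotN p.1 q.1 + dotN p.2 q.2

/-- Normal cone in `ℝ^{nN} × ℝ^{mN}` (empty outside the set). -/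
def nconeC {N n m : ℕ} (C : Set (VecN N n × VecN N m)) (p : VecN N n × VecN N m) :
    Set (VecN N n × VecN N m) :=
  {v | p ∈ C ∧ ∀ q ∈ C, ip2 v (q - p) ≤ 0}

/-- every solution of GVI(𝒳, F_a) is a generalized aggregative
equilibrium. -/
theorem stmt16 {N n m : ℕ} (hN : 0 < N) (hn : 0 < n) (hm : 0 < m)
    (Ω : Fin N → Set (Vec n)) (f : Fin N → Vec n → Vec n → ℝ)
    (A : Fin N → Matrix (Fin m) (Fin n) ℝ) (b : Fin N → Vec m)
    (hΩne : ∀ i, (Ω i).Nonempty) (hΩcp : ∀ i, IsCompact (Ω i))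
    (hΩcv : ∀ i, Convex ℝ (Ω i))
    (hfcont : ∀ i, Continuous (fun p : Vec n × Vec n => f i p.1 p.2))
    (hfconv : ∀ i w, ConvexOn ℝ Set.univ (fun z => f i z w))
    (xbar : VecN N n)
    (hGVI : xbar ∈ Xfeas Ω A b ∧
      ∃ g ∈ Fa f xbar, ∀ x ∈ Xfeas Ω A b, 0 ≤ dotN g (x - xbar)) :
    xbar ∈ Xfeas Ω A b ∧
      ∀ i, ∀ z ∈ Ω i,
        (∀ j, ((A i).mulVec z - b i) j ≤
            (∑ jj ∈ Finset.univ.erase i, (b jj - (A jj).mulVec (xbar jj))) j) →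
          f i (xbar i) (Mavg xbar) ≤ f i z (Mavg xbar) := by
  obtain ⟨hfeas, g, hg, hvi⟩ := hGVI
  refine ⟨hfeas, fun i z hzΩ hzb => ?_⟩
  set x : VecN N n := Function.update xbar i z with hx
  have hxfeas : x ∈ Xfeas Ω A b := by
    constructor
    · intro k
      by_cases hk : k = i
      · subst hk; simpa [hx] using hzΩ
      · simpa [hx, Function.update_of_ne hk] using hfeas.1 k
    · intro j
      have hsplit : bigA A x j =
          (A i).mulVec z j + ∑ k ∈ Finset.univ.erase i, (A k).mulVec (xbar k) j := by
        simp only [bigA, Finset.sum_apply]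
        rw [← Finset.add_sum_erase _ _ (Finset.mem_univ i)]
        congr 1
        · rw [hx, Function.update_self]
        · exact Finset.sum_congr rfl fun k hk => by
            rw [hx, Function.update_of_ne (Finset.ne_of_mem_erase hk)]
      have hz := hzb j
      simp only [Pi.sub_apply, Finset.sum_apply, Pi.sub_apply, Finset.sum_sub_distrib] at hz
      have : (A i).mulVec z j + ∑ k ∈ Finset.univ.erase i, (A k).mulVec (xbar k) j
          ≤ ∑ k ∈ Finset.univ.erase i, b k j + b i j := by linarith
      rw [hsplit]
      calc (A i).mulVec z j + ∑ k ∈ Finset.univ.erase i, (A k).mulVec (xbar k) j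
          ≤ ∑ k ∈ Finset.univ.erase i, b k j + b i j := this
        _ = (∑ k, b k) j := by
            rw [Finset.sum_apply, ← Finset.add_sum_erase _ _ (Finset.mem_univ i)]
            ring
  have hdot : dotN g (x - xbar) = dot (g i) (z - xbar i) := by
    unfold dotN
    rw [← Finset.add_sum_erase _ _ (Finset.mem_univ i)]
    have h0 : ∀ k ∈ Finset.univ.erase i, dot (g k) ((x - xbar) k) = 0 := by
      intro k hk
      have : (x - xbar) k = 0 := by
        simp [hx, Function.update_of_ne (Finset.ne_of_mem_erase hk)]
      simp [this, dot]
    rw [Finset.sum_eq_zero h0]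
    simp [hx, dot]
  have h1 : 0 ≤ dot (g i) (z - xbar i) := hdot ▸ hvi x hxfeas
  have h2 := hg i z
  unfold dot at h1 h2
  linarith
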